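/- Let (Ω, P) be a probability space and let X_1, …, X_n be independent identically distributed random variables on Ω, each taking the value 1 with probability p and the value 0 with probability 1 − p, where 0 < p ≤ 1. Let A = X_1 + ⋯ + X_n. Then for every ζ with 0 < ζ ≤ 1, the probability that |A/n − p| ≥ ζ·p is at most 2·exp(−n·p·ζ²/3). -/

import Mathlib

open MeasureTheory ProbabilityTheory Real

/-- Quadratic upper bound on `exp` on `[-1, 1]`. -/
lemma exp_le_one_add_add {x : ℝ} (hx : |x| ≤ 1) :
    Real.exp x ≤ 1 + x + 3 / 4 * x ^ 2 := by
  have h := Real.exp_bound hx (n := 2) (by norm_num)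
  have h2 : ∑ m ∈ Finset.range 2, x ^ m / (Nat.factorial m) = 1 + x := by
    simp [Finset.sum_range_succ]
  rw [h2] at h
  have h3 := (abs_le.mp h).2
  have hx2 : |x| ^ 2 = x ^ 2 := sq_abs x
  rw [hx2] at h3
  norm_num at h3
  nlinarith

/-- **Two-sided multiplicative Chernoff bound** for sums of i.i.d. Bernoulli
random variables: if `X 1, …, X n` are independent random variables, each taking
the value `1` with probability `p` and the value `0` with probability `1 - p`
(`0 < p ≤ 1`), and `A = ∑ i, X i`, then for every `0 < ζ ≤ 1`,
`P(|A/n - p| ≥ ζ·p) ≤ 2·exp(-n·p·ζ²/3)`. -/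
theorem chernoff_two_sided_multiplicative
    {Ω : Type*} [MeasurableSpace Ω] (μ : Measure Ω) [IsProbabilityMeasure μ]
    (n : ℕ) (hn : 0 < n) (X : Fin n → Ω → ℝ)
    (hmeas : ∀ i, Measurable (X i))
    (hindep : iIndepFun X μ)
    (p : ℝ) (hp : 0 < p) (hp1 : p ≤ 1)
    (hval : ∀ i, ∀ᵐ ω ∂μ, X i ω = 0 ∨ X i ω = 1)
    (hone : ∀ i, μ {ω | X i ω = 1} = ENNReal.ofReal p)
    (hzero : ∀ i, μ {ω | X i ω = 0} = ENNReal.ofReal (1 - p))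
    (ζ : ℝ) (hζ : 0 < ζ) (hζ1 : ζ ≤ 1) :
    μ {ω | ζ * p ≤ |(∑ i, X i ω) / (n : ℝ) - p|}
      ≤ ENNReal.ofReal (2 * Real.exp (-(n * p * ζ ^ 2) / 3)) := by
  have hn' : (0 : ℝ) < n := by exact_mod_cast hn
  -- integrability of each X i
  have hXint : ∀ i, Integrable (X i) μ := by
    intro i
    refine ⟨(hmeas i).aestronglyMeasurable, ?_⟩
    refine HasFiniteIntegral.of_bounded (C := 1) ?_
    filter_upwards [hval i] with ω h
    rcases h with h | h <;> simp [h]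
  -- expectation of each X i
  have hEX : ∀ i, ∫ ω, X i ω ∂μ = p := by
    intro i
    have hs : MeasurableSet {ω | X i ω = 1} := hmeas i (measurableSet_singleton 1)
    have hind : X i =ᵐ[μ] Set.indicator {ω | X i ω = 1} (fun _ => (1 : ℝ)) := by
      filter_upwards [hval i] with ω h
      rcases h with h | h
      · have : ω ∉ {ω | X i ω = 1} := by simp [Set.mem_setOf_eq, h]
        simp [Set.indicator_apply, this, h]
      · have : ω ∈ {ω | X i ω = 1} := h
        simp [Set.indicator_apply, this, h]
    rw [integral_congr_ae hind, integral_indicator_const (1 : ℝ) hs, measureReal_def, hone i,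
      ENNReal.toReal_ofReal hp.le]
    simp
  -- integrability of exp (t * X i)
  have hint : ∀ (t : ℝ) i, Integrable (fun ω => exp (t * X i ω)) μ := by
    intro t i
    refine ⟨((hmeas i).const_mul t).exp.aestronglyMeasurable, ?_⟩
    refine HasFiniteIntegral.of_bounded (C := exp |t|) ?_
    filter_upwards [hval i] with ω h
    rcases h with h | h
    · simp only [h, mul_zero, Real.exp_zero, norm_one]
      rw [← Real.exp_zero]
      exact Real.exp_le_exp.mpr (abs_nonneg t)
    · simp only [h, mul_one, Real.norm_eq_abs, Real.abs_exp]
      exact Real.exp_le_exp.mpr (le_abs_self t)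
  -- mgf of each X i
  have hmgf : ∀ (t : ℝ) i, mgf (X i) μ t = 1 + p * (exp t - 1) := by
    intro t i
    have heq : (fun ω => exp (t * X i ω)) =ᵐ[μ]
        fun ω => 1 + (exp t - 1) * X i ω := by
      filter_upwards [hval i] with ω h
      rcases h with h | h <;> simp [h] <;> ring
    rw [mgf, integral_congr_ae heq]
    rw [integral_add (integrable_const 1) ((hXint _).const_mul _)]
    rw [integral_const_mul, hEX i]
    simp [measure_univ, mul_comm]
  -- mgf of the sum
  have hmgfS : ∀ t : ℝ, mgf (∑ i, X i) μ t = (1 + p * (exp t - 1)) ^ n := by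
    intro t
    rw [hindep.mgf_sum hmeas]
    simp [hmgf t, Finset.prod_const, Finset.card_univ]
  have hintS : ∀ t : ℝ, Integrable (fun ω => exp (t * (∑ i, X i) ω)) μ :=
    fun t => hindep.integrable_exp_mul_sum hmeas (fun i _ => hint t i)
  -- generic mgf bound : (1+p(e^t-1))^n ≤ exp (n * (p * (exp t - 1)))
  have hpow : ∀ t : ℝ, (1 + p * (exp t - 1)) ^ n ≤ exp ((n : ℝ) * (p * (exp t - 1))) := by
    intro t
    have h0 : (0 : ℝ) ≤ 1 + p * (exp t - 1) := by nlinarith [Real.exp_pos t]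
    have h1 : 1 + p * (exp t - 1) ≤ exp (p * (exp t - 1)) := by
      linarith [Real.add_one_le_exp (p * (exp t - 1))]
    calc (1 + p * (exp t - 1)) ^ n ≤ exp (p * (exp t - 1)) ^ n :=
          pow_le_pow_left₀ h0 h1 n
      _ = exp ((n : ℝ) * (p * (exp t - 1))) := (Real.exp_nat_mul _ n).symm
  set E := Real.exp (-(n * p * ζ ^ 2) / 3) with hE
  -- upper tail
  have hup : μ {ω | (n : ℝ) * p * (1 + ζ) ≤ ∑ i, X i ω} ≤ ENNReal.ofReal E := by
    have ht0 : (0 : ℝ) ≤ 2 * ζ / 3 := by linarith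
    have habs : |2 * ζ / 3| ≤ 1 := by rw [abs_of_nonneg ht0]; linarith
    have hq := exp_le_one_add_add habs
    have h1 := measure_ge_le_exp_mul_mgf (X := ∑ i, X i) (μ := μ)
      ((n : ℝ) * p * (1 + ζ)) ht0 (hintS _)
    rw [hmgfS] at h1
    have h2 : exp (-(2 * ζ / 3) * ((n : ℝ) * p * (1 + ζ))) * (1 + p * (exp (2 * ζ / 3) - 1)) ^ n
        ≤ E := by
      calc exp (-(2 * ζ / 3) * ((n : ℝ) * p * (1 + ζ))) * (1 + p * (exp (2 * ζ / 3) - 1)) ^ n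
          ≤ exp (-(2 * ζ / 3) * ((n : ℝ) * p * (1 + ζ)))
            * exp ((n : ℝ) * (p * (exp (2 * ζ / 3) - 1))) := by
            exact mul_le_mul_of_nonneg_left (hpow _) (Real.exp_pos _).le
        _ = exp (-(2 * ζ / 3) * ((n : ℝ) * p * (1 + ζ))
            + (n : ℝ) * (p * (exp (2 * ζ / 3) - 1))) := (Real.exp_add _ _).symm
        _ ≤ E := by
            rw [hE, Real.exp_le_exp]
            nlinarith [mul_nonneg (mul_nonneg (Nat.cast_nonneg (α := ℝ) n) hp.le)
              (sub_nonneg.mpr hq)]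
    rw [ENNReal.le_ofReal_iff_toReal_le (measure_ne_top μ _) (by positivity)]
    · simp only [Finset.sum_apply] at h1
      exact h1.trans h2
  -- lower tail
  have hlow : μ {ω | ∑ i, X i ω ≤ (n : ℝ) * p * (1 - ζ)} ≤ ENNReal.ofReal E := by
    have ht0 : (-(2 * ζ / 3) : ℝ) ≤ 0 := by linarith
    have habs : |(-(2 * ζ / 3) : ℝ)| ≤ 1 := by rw [abs_neg, abs_of_nonneg (by linarith)]; linarith
    have hq := exp_le_one_add_add habs
    have h1 := measure_le_le_exp_mul_mgf (X := ∑ i, X i) (μ := μ)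
      ((n : ℝ) * p * (1 - ζ)) ht0 (hintS _)
    rw [hmgfS] at h1
    have h2 : exp (-(-(2 * ζ / 3)) * ((n : ℝ) * p * (1 - ζ)))
        * (1 + p * (exp (-(2 * ζ / 3)) - 1)) ^ n ≤ E := by
      calc exp (-(-(2 * ζ / 3)) * ((n : ℝ) * p * (1 - ζ)))
            * (1 + p * (exp (-(2 * ζ / 3)) - 1)) ^ n
          ≤ exp (-(-(2 * ζ / 3)) * ((n : ℝ) * p * (1 - ζ)))
            * exp ((n : ℝ) * (p * (exp (-(2 * ζ / 3)) - 1))) := by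
            exact mul_le_mul_of_nonneg_left (hpow _) (Real.exp_pos _).le
        _ = exp (-(-(2 * ζ / 3)) * ((n : ℝ) * p * (1 - ζ))
            + (n : ℝ) * (p * (exp (-(2 * ζ / 3)) - 1))) := (Real.exp_add _ _).symm
        _ ≤ E := by
            rw [hE, Real.exp_le_exp]
            nlinarith [mul_nonneg (mul_nonneg (Nat.cast_nonneg (α := ℝ) n) hp.le)
              (sub_nonneg.mpr hq)]
    rw [ENNReal.le_ofReal_iff_toReal_le (measure_ne_top μ _) (by positivity)]
    · simp only [Finset.sum_apply] at h1
      exact h1.trans h2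
  -- combine
  have hsub : {ω | ζ * p ≤ |(∑ i, X i ω) / (n : ℝ) - p|}
      ⊆ {ω | (n : ℝ) * p * (1 + ζ) ≤ ∑ i, X i ω}
        ∪ {ω | ∑ i, X i ω ≤ (n : ℝ) * p * (1 - ζ)} := by
    intro ω hω
    simp only [Set.mem_setOf_eq, Set.mem_union] at *
    have key : (∑ i, X i ω) = ((∑ i, X i ω) / (n : ℝ)) * n := by field_simp
    rcases abs_cases ((∑ i, X i ω) / (n : ℝ) - p) with ⟨habs, _⟩ | ⟨habs, _⟩ <;>
      rw [habs] at hω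
    · left; rw [key]; nlinarith
    · right; rw [key]; nlinarith
  calc μ {ω | ζ * p ≤ |(∑ i, X i ω) / (n : ℝ) - p|}
      ≤ μ ({ω | (n : ℝ) * p * (1 + ζ) ≤ ∑ i, X i ω}
          ∪ {ω | ∑ i, X i ω ≤ (n : ℝ) * p * (1 - ζ)}) := measure_mono hsub
    _ ≤ μ {ω | (n : ℝ) * p * (1 + ζ) ≤ ∑ i, X i ω}
        + μ {ω | ∑ i, X i ω ≤ (n : ℝ) * p * (1 - ζ)} := measure_union_le _ _
    _ ≤ ENNReal.ofReal E + ENNReal.ofReal E := add_le_add hup hlow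
    _ = ENNReal.ofReal (2 * E) := by
        rw [two_mul, ENNReal.ofReal_add (Real.exp_nonneg _) (Real.exp_nonneg _)]
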